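/- (Eq. (TT).) Let ιA, ιB be finite types and σ : Equiv.Perm (Fin 4). Then tr(T_σ * T') = (card ιA)^{#(σ · π_A)} · (card ιB)^{#(σ · π_B)}, where π_A = (0 1)(2 3) and π_B = (0 3)(1 2); since the number of cycles is invariant under conjugation and inversion, the order of composition is immaterial. -/

import Mathlib

open Matrix Kronecker
open scoped Classical

noncomputable section

/-- Single-qubit Pauli matrices. -/
def pauli : Fin 4 → Matrix (Fin 2) (Fin 2) ℂ :=
  ![1, !![0, 1; 1, 0], !![0, -Complex.I; Complex.I, 0], !![1, 0; 0, -1]]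

/-- Pauli string on `N` qubits with label `a`. -/
def PauliString {N : ℕ} (a : Fin N → Fin 4) :
    Matrix (Fin N → Fin 2) (Fin N → Fin 2) ℂ :=
  fun f g => ∏ k, pauli (a k) (f k) (g k)

/-- Reduced Choi state: partial trace over the doubled-B factor of the
normalized Choi state of `O`. -/
def rhoA {ιA ιB : Type*} [Fintype ιA] [Fintype ιB]
    (O : Matrix (ιA × ιB) (ιA × ιB) ℂ) :
    Matrix (ιA × ιA) (ιA × ιA) ℂ :=
  fun p q =>
    (1 / (Fintype.card ιA * Fintype.card ιB : ℂ)) *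
      ∑ b : ιB, ∑ b' : ιB, O (p.1, b) (p.2, b') * star (O (q.1, b) (q.2, b'))

/-- Identification of `N = N_A + N_B` qubits with the pair of subsystems. -/
def qubitEquiv (NA NB : ℕ) :
    (Fin (NA + NB) → Fin 2) ≃ (Fin NA → Fin 2) × (Fin NB → Fin 2) :=
  (Equiv.arrowCongr finSumFinEquiv.symm (Equiv.refl (Fin 2))).trans
    (Equiv.sumArrowEquivProdArrow _ _ _)

/-- Reduced Choi state of an `N = N_A + N_B` qubit operator, subsystem A
being the first `N_A` qubits. -/
def rhoAq (NA NB : ℕ)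
    (O : Matrix (Fin (NA + NB) → Fin 2) (Fin (NA + NB) → Fin 2) ℂ) :
    Matrix ((Fin NA → Fin 2) × (Fin NA → Fin 2))
      ((Fin NA → Fin 2) × (Fin NA → Fin 2)) ℂ :=
  rhoA (Matrix.reindex (qubitEquiv NA NB) (qubitEquiv NA NB) O)

/-- `n`-fold replica (tensor power) of a matrix. -/
def replica {ι : Type*} (n : ℕ) (O : Matrix ι ι ℂ) :
    Matrix (Fin n → ι) (Fin n → ι) ℂ :=
  fun f g => ∏ a, O (f a) (g a)

/-- Replica permutation operator. -/
def Tperm {ι : Type*} [DecidableEq ι] {n : ℕ} (π : Equiv.Perm (Fin n)) :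
    Matrix (Fin n → ι) (Fin n → ι) ℂ :=
  fun f g => if f = g ∘ π then 1 else 0

/-- Number of cycles of a permutation, counting fixed points as 1-cycles. -/
def numCycles {n : ℕ} (π : Equiv.Perm (Fin n)) : ℕ :=
  Multiset.card π.cycleType + (Finset.univ.filter fun x => π x = x).card

/-- `δ(π) = 0` if `π` has no fixed points and all cycles of even length,
else `δ(π) = 1`. -/
def deltaOdd {n : ℕ} (π : Equiv.Perm (Fin n)) : ℕ :=
  if (∀ x, π x ≠ x) ∧ (∀ c ∈ π.cycleType, Even c) then 0 else 1

/-- Projector onto four-fold replicated Pauli strings. -/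
def LambdaPlus (N : ℕ) :
    Matrix (Fin 4 → (Fin N → Fin 2)) (Fin 4 → (Fin N → Fin 2)) ℂ :=
  (1 / (4 ^ N : ℂ)) • ∑ a : Fin N → Fin 4, replica 4 (PauliString a)

def permA : Equiv.Perm (Fin 4) := Equiv.swap 0 1 * Equiv.swap 2 3
def permB : Equiv.Perm (Fin 4) := Equiv.swap 0 3 * Equiv.swap 1 2

/-- The purity contraction permutation operator `T'` on four replicas of a
bipartite system. -/
def Tprime {ιA ιB : Type*} [DecidableEq ιA] [DecidableEq ιB] :
    Matrix (Fin 4 → ιA × ιB) (Fin 4 → ιA × ιB) ℂ :=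
  fun f g =>
    if (∀ a, (f a).1 = (g (permA a)).1 ∧ (f a).2 = (g (permB a)).2) then 1 else 0

/-- The unitary stabilizer group of `U` (as a finite set of pairs of Pauli
labels). -/
def Stab {N : ℕ} (U : Matrix (Fin N → Fin 2) (Fin N → Fin 2) ℂ) :
    Finset ((Fin N → Fin 4) × (Fin N → Fin 4)) :=
  Finset.univ.filter fun p =>
    Matrix.trace (PauliString p.1 * Uᴴ * PauliString p.2 * U) / (2 ^ N : ℂ)
      ∈ ({1, -1} : Set ℂ)



section AuxCycleCount
open scoped Classical
variable {α : Type*} [Fintype α] [DecidableEq α]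

/-- Orbit quotient of the `SameCycle` relation. -/
abbrev Orb (π : Equiv.Perm α) := Quotient (Equiv.Perm.SameCycle.setoid π)

def orbEquiv (π : Equiv.Perm α) :
    Orb π ≃ ({c // c ∈ π.cycleFactorsFinset} ⊕ {x // π x = x}) where
  toFun := Quotient.lift
    (fun a => if h : π a = a then Sum.inr ⟨a, h⟩ else
      Sum.inl ⟨π.cycleOf a, Equiv.Perm.cycleOf_mem_cycleFactorsFinset_iff.mpr
        (Equiv.Perm.mem_support.mpr h)⟩)
    (by
      intro a b hab
      replace hab : π.SameCycle a b := hab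
      by_cases h : π a = a
      · have hb : b = a := by
          obtain ⟨i, hi⟩ := hab
          rw [← hi, Equiv.Perm.zpow_apply_eq_self_of_apply_eq_self h]
        subst hb; rfl
      · have h2 : ¬ π b = b := by
          intro hb
          obtain ⟨i, hi⟩ := hab.symm
          have hb' : a = b := by
            rw [← hi, Equiv.Perm.zpow_apply_eq_self_of_apply_eq_self hb]
          exact h (hb' ▸ hb)
        simp only [h, h2, dif_neg, not_false_iff]
        exact congrArg _ (Subtype.ext hab.cycleOf_eq))
  invFun := fun s => match s with
    | Sum.inl ⟨c, hc⟩ => ⟦(Equiv.Perm.mem_cycleFactorsFinset_iff.mp hc).1.nonempty_support.choose⟧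
    | Sum.inr ⟨x, _⟩ => ⟦x⟧
  left_inv := by
    refine Quotient.ind (fun a => ?_)
    by_cases h : π a = a
    · simp [h]
    · simp only [Quotient.lift_mk, h, dif_neg, not_false_iff]
      apply Quotient.sound
      have hcf : π.cycleOf a ∈ π.cycleFactorsFinset :=
        Equiv.Perm.cycleOf_mem_cycleFactorsFinset_iff.mpr (Equiv.Perm.mem_support.mpr h)
      have hspec := (Equiv.Perm.mem_cycleFactorsFinset_iff.mp hcf).1.nonempty_support.choose_spec
      exact ((Equiv.Perm.mem_support_cycleOf_iff).mp hspec).1.symm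
  right_inv := by
    rintro (⟨c, hc⟩ | ⟨x, hx⟩)
    · have hspec := (Equiv.Perm.mem_cycleFactorsFinset_iff.mp hc).1.nonempty_support.choose_spec
      set b := (Equiv.Perm.mem_cycleFactorsFinset_iff.mp hc).1.nonempty_support.choose with hbdef
      have hcb : c = π.cycleOf b := Equiv.Perm.cycle_is_cycleOf hspec hc
      have hπb : π b ≠ b := by
        have h1 := Equiv.Perm.mem_support.mp hspec
        rwa [(Equiv.Perm.mem_cycleFactorsFinset_iff.mp hc).2 b hspec] at h1
      simp only [Quotient.lift_mk, hπb, dif_neg, not_false_iff]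
      exact (dif_neg hπb).trans (congrArg Sum.inl (Subtype.ext hcb.symm))
    · simp [hx]

lemma card_orb {n : ℕ} (π : Equiv.Perm (Fin n)) :
    Fintype.card (Orb π) = numCycles π := by
  rw [Fintype.card_congr (orbEquiv π), Fintype.card_sum, numCycles]
  congr 1
  · rw [Equiv.Perm.cycleType, Multiset.card_map, Fintype.card_coe]
    rfl
  · rw [Fintype.card_subtype]

omit [Fintype α] [DecidableEq α] in
lemma fix_zpow {ι : Type*} (π : Equiv.Perm α) (f : α → ι)
    (h : ∀ a, f a = f (π a)) : ∀ (i : ℤ) (a : α), f ((π ^ i) a) = f a := by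
  intro i
  induction i using Int.induction_on with
  | zero => simp
  | succ i ih =>
    intro a
    have e1 : (π ^ ((i : ℤ) + 1)) a = (π ^ (i : ℤ)) (π a) := by
      rw [_root_.zpow_add_one]; rfl
    rw [e1, ih (π a), ← h a]
  | pred i ih =>
    intro a
    have e1 : (π ^ (-(i : ℤ) - 1)) a = (π ^ (-(i : ℤ))) (π⁻¹ a) := by
      rw [_root_.zpow_sub_one]; rfl
    rw [e1, ih (π⁻¹ a), h (π⁻¹ a), Equiv.Perm.coe_inv, Equiv.apply_symm_apply]

def constEquiv (π : Equiv.Perm α) (ι : Type*) :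
    {h : α → ι // ∀ a, h a = h (π a)} ≃ (Orb π → ι) where
  toFun h := Quotient.lift h.1 (fun a b hab => by
    obtain ⟨i, hi⟩ := (hab : π.SameCycle a b)
    rw [← hi, fix_zpow π h.1 h.2])
  invFun k := ⟨fun a => k ⟦a⟧, fun a => congrArg k (Quotient.sound ⟨1, by simp⟩)⟩
  left_inv h := rfl
  right_inv k := by
    funext q
    induction q using Quotient.ind
    rfl

lemma sum_indicator_const {n : ℕ} (π : Equiv.Perm (Fin n)) (ι : Type*) [Fintype ι]
    [DecidableEq ι] :
    (∑ h : Fin n → ι, (if ∀ a, h a = h (π a) then (1 : ℂ) else 0)) =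
      (Fintype.card ι : ℂ) ^ numCycles π := by
  rw [Finset.sum_boole]
  have : (Finset.univ.filter fun h : Fin n → ι => ∀ a, h a = h (π a)).card
      = Fintype.card ι ^ numCycles π := by
    rw [← Fintype.card_subtype, Fintype.card_congr (constEquiv π ι),
      Fintype.card_fun, card_orb]
  rw [this]
  push_cast
  ring

end AuxCycleCount

/-- Eq. (TT): `tr(T_σ T')` factorizes into the cycle counts of
`σ·π_A` and `σ·π_B`. -/
theorem trace_Tperm_Tprime {ιA ιB : Type*}
    [Fintype ιA] [Fintype ιB] [DecidableEq ιA] [DecidableEq ιB]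
    (σ : Equiv.Perm (Fin 4)) :
    Matrix.trace ((Tperm σ : Matrix (Fin 4 → ιA × ιB) (Fin 4 → ιA × ιB) ℂ) *
        Tprime) =
      (Fintype.card ιA : ℂ) ^ numCycles (σ * permA) *
        (Fintype.card ιB : ℂ) ^ numCycles (σ * permB) := by
  classical
  simp only [Matrix.trace, Matrix.diag, Matrix.mul_apply, Tperm, Tprime]
  rw [Finset.sum_comm]
  simp only [ite_mul, one_mul, zero_mul, Finset.sum_ite_eq', Finset.mem_univ, if_true]
  have step1 : ∀ g : Fin 4 → ιA × ιB,
      (if (∀ a, (g a).1 = ((g ∘ σ) (permA a)).1 ∧ (g a).2 = ((g ∘ σ) (permB a)).2)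
        then (1 : ℂ) else 0) =
      (if (∀ a, (g a).1 = (g ((σ * permA) a)).1) then (1 : ℂ) else 0) *
      (if (∀ a, (g a).2 = (g ((σ * permB) a)).2) then (1 : ℂ) else 0) := by
    intro g
    show (if (∀ a, (g a).1 = (g (σ (permA a))).1 ∧ (g a).2 = (g (σ (permB a))).2) then (1 : ℂ) else 0) =
      (if (∀ a, (g a).1 = (g (σ (permA a))).1) then (1 : ℂ) else 0) *
      (if (∀ a, (g a).2 = (g (σ (permB a))).2) then (1 : ℂ) else 0)
    by_cases h1 : ∀ a, (g a).1 = (g (σ (permA a))).1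
    · by_cases h2 : ∀ a, (g a).2 = (g (σ (permB a))).2
      · rw [if_pos h1, if_pos h2, if_pos (fun a => ⟨h1 a, h2 a⟩), one_mul]
      · rw [if_neg h2, mul_zero, if_neg (fun h => h2 (fun a => (h a).2))]
    · rw [if_neg h1, zero_mul, if_neg (fun h => h1 (fun a => (h a).1))]
  simp only [step1]
  have step2 := Equiv.sum_comp (Equiv.arrowProdEquivProdArrow (Fin 4) (fun _ => ιA) (fun _ => ιB)).symm
    (fun g : Fin 4 → ιA × ιB =>
      (if (∀ a, (g a).1 = (g ((σ * permA) a)).1) then (1 : ℂ) else 0) *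
      (if (∀ a, (g a).2 = (g ((σ * permB) a)).2) then (1 : ℂ) else 0))
  rw [← step2]
  simp only [Equiv.arrowProdEquivProdArrow, Equiv.coe_fn_symm_mk]
  rw [Fintype.sum_prod_type]
  dsimp only
  refine Eq.trans (Finset.sum_mul_sum Finset.univ Finset.univ
      (fun x : Fin 4 → ιA => if ∀ a, x a = x ((σ * permA) a) then (1 : ℂ) else 0)
      (fun y : Fin 4 → ιB => if ∀ a, y a = y ((σ * permB) a) then (1 : ℂ) else 0)).symm ?_
  exact congrArg₂ (· * ·) (sum_indicator_const (σ * permA) ιA) (sum_indicator_const (σ * permB) ιB)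


end
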